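/- Let μ_1,…,μ_m be nonzero complex numbers with |μ_i| ≠ 1 for every i and |μ_i| > 1 for at least one i. For each positive integer n define a_{1,n},…,a_{m,n} by ∏_{j=1}^m (z − μ_j^n) = z^m + a_{1,n} z^{m−1} + ⋯ + a_{m,n}. Then lim_{n→∞} (1/n)·log₂ ( Σ_{i=1}^m |a_{i,n}| ) = Σ_{i : |μ_i| > 1} log₂ |μ_i|. (That is, the rate threshold R_n = (1/n) log₂ Σ_i |a_{i,n}| of the no-feedback stabilization theorem converges to R* = Σ_{|μ_i|>1} log₂ |μ_i|.) -/

import Mathlib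

open Finset Filter Real Polynomial


/-- `acoef m μ n i` is the coefficient `a_{i,n}` (for `1 ≤ i ≤ m`) defined by
`∏_{j=1}^m (z − μ_j^n) = z^m + a_{1,n} z^{m-1} + ⋯ + a_{m,n}`;
i.e. the coefficient of `z^{m-i}` in the monic polynomial with roots `μ_1^n, …, μ_m^n`. -/
noncomputable def acoef (m : ℕ) (μ : Fin m → ℂ) (n i : ℕ) : ℂ :=
  (∏ j : Fin m, (Polynomial.X - Polynomial.C (μ j ^ n))).coeff (m - i)


lemma acoef_abs (m : ℕ) (μ : Fin m → ℂ) (n i : ℕ) (hi1 : 1 ≤ i) (him : i ≤ m) :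
    ‖acoef m μ n i‖
      = ‖∑ t ∈ Finset.powersetCard i (Finset.univ : Finset (Fin m)),
          ∏ j ∈ t, μ j ^ n‖ := by
  have hcard : Multiset.card (Multiset.map (fun j => μ j ^ n) Finset.univ.val) = m := by
    simp
  have h1 : (∏ j : Fin m, (X - C (μ j ^ n)))
      = ((Finset.univ.val.map (fun j => μ j ^ n)).map (fun t => X - C t)).prod := by
    rw [Multiset.map_map]
    rfl
  have hk : m - i ≤ Multiset.card (Multiset.map (fun j => μ j ^ n) Finset.univ.val) := by
    rw [hcard]; omega
  rw [acoef, h1, Multiset.prod_X_sub_C_coeff _ hk, hcard, Nat.sub_sub_self him,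
    Finset.esymm_map_val, norm_mul]
  have : ‖(-1 : ℂ) ^ i‖ = 1 := by simp
  rw [this, one_mul]

lemma abs_prod_pow (m : ℕ) (μ : Fin m → ℂ) (n : ℕ) (t : Finset (Fin m)) :
    ‖∏ j ∈ t, μ j ^ n‖ = (∏ j ∈ t, ‖μ j‖) ^ n := by
  rw [norm_prod]
  simp [norm_pow, Finset.prod_pow]

/-- If `|μ_i| ≠ 1` for all `i` and `|μ_i| > 1` for some `i`, then
`(1/n) log₂ (Σ_{i=1}^m |a_{i,n}|) → Σ_{i:|μ_i|>1} log₂ |μ_i|`; that is, the rate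
threshold `R_n` of the no-feedback stabilization theorem converges to `R*`. -/
theorem rate_threshold_tendsto (m : ℕ) (μ : Fin m → ℂ)
    (hμ0 : ∀ i, μ i ≠ 0) (hμ1 : ∀ i, ‖μ i‖ ≠ 1)
    (hex : ∃ i, 1 < ‖μ i‖) :
    Filter.Tendsto
      (fun n : ℕ => (1 / (n : ℝ)) *
        Real.logb 2 (∑ i ∈ Finset.Icc 1 m, ‖acoef m μ n i‖))
      Filter.atTop
      (nhds (∑ i ∈ Finset.univ.filter fun i => 1 < ‖μ i‖,
        Real.logb 2 (‖μ i‖))) := by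
  classical
  set U : Finset (Fin m) := Finset.univ.filter fun i => 1 < ‖μ i‖ with hU
  set P : ℝ := ∏ j ∈ U, ‖μ j‖ with hPdef
  have hνpos : ∀ i, 0 < ‖μ i‖ := fun i => norm_pos_iff.mpr (hμ0 i)
  have hUne : U.Nonempty := by
    obtain ⟨i, hi⟩ := hex; exact ⟨i, by simp [hU, hi]⟩
  have hUprop : ∀ i ∈ U, 1 < ‖μ i‖ := by
    intro i hi; rw [hU] at hi; exact (Finset.mem_filter.1 hi).2
  have hone_lt : ∀ s : Finset (Fin m), (∀ i ∈ s, 1 < ‖μ i‖) → s.Nonempty →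
      1 < ∏ j ∈ s, ‖μ j‖ := by
    intro s hs hne
    calc (1 : ℝ) = ∏ _j ∈ s, 1 := by simp
      _ < ∏ j ∈ s, ‖μ j‖ :=
        Finset.prod_lt_prod_of_nonempty (by norm_num) hs hne
  have hP1 : 1 < P := by
    rw [hPdef]; exact hone_lt U hUprop hUne
  have hP0 : 0 < P := lt_trans one_pos hP1
  have hm : 1 ≤ m := by obtain ⟨i, _⟩ := hex; exact i.pos
  set k := U.card with hkdef
  have hk1 : 1 ≤ k := Finset.card_pos.2 hUne
  have hkm : k ≤ m := by
    have := Finset.card_le_univ U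
    simpa using this
  have hwpos : ∀ t : Finset (Fin m), 0 < ∏ j ∈ t, ‖μ j‖ := by
    intro t; exact Finset.prod_pos fun j _ => hνpos j
  -- every subset product is at most P
  have hwle : ∀ t : Finset (Fin m), (∏ j ∈ t, ‖μ j‖) ≤ P := by
    intro t
    have h1 : (∏ j ∈ t, ‖μ j‖)
        = (∏ j ∈ t ∩ U, ‖μ j‖) * (∏ j ∈ t \ U, ‖μ j‖) :=
      (Finset.prod_inter_mul_prod_diff t U _).symm
    have h2 : (∏ j ∈ t \ U, ‖μ j‖) ≤ 1 := by
      refine Finset.prod_le_one (fun j _ => (hνpos j).le) ?_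
      intro j hj
      have hj2 := (Finset.mem_sdiff.1 hj).2
      have : ¬ 1 < ‖μ j‖ := by simpa [hU] using hj2
      linarith [lt_or_gt_of_ne (hμ1 j), this]
    have hsplitP : (∏ j ∈ U ∩ t, ‖μ j‖) * (∏ j ∈ U \ t, ‖μ j‖) = P :=
      Finset.prod_inter_mul_prod_diff U t _
    have hge1 : (1 : ℝ) ≤ ∏ j ∈ U \ t, ‖μ j‖ := by
      calc (1 : ℝ) = ∏ _j ∈ U \ t, 1 := by simp
        _ ≤ ∏ j ∈ U \ t, ‖μ j‖ :=
          Finset.prod_le_prod (by norm_num)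
            (fun i hi => (hUprop i (Finset.mem_sdiff.1 hi).1).le)
    have h3 : (∏ j ∈ t ∩ U, ‖μ j‖) ≤ P := by
      rw [Finset.inter_comm]
      nlinarith [hwpos (U ∩ t)]
    nlinarith [hwpos (t ∩ U), hwpos (t \ U)]
  -- strict inequality off the dominant subset
  have hwlt : ∀ t ∈ (Finset.powersetCard k (Finset.univ : Finset (Fin m))).erase U,
      (∏ j ∈ t, ‖μ j‖) < P := by
    intro t ht
    obtain ⟨htne, htmem⟩ := Finset.mem_erase.1 ht
    have htcard : t.card = k := (Finset.mem_powersetCard.1 htmem).2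
    have hUt : (U \ t).Nonempty := by
      rw [Finset.sdiff_nonempty]
      intro hsub
      exact htne (Finset.eq_of_subset_of_card_le hsub (le_of_eq htcard)).symm
    have hsplit : (∏ j ∈ U ∩ t, ‖μ j‖) * (∏ j ∈ U \ t, ‖μ j‖) = P :=
      Finset.prod_inter_mul_prod_diff U t _
    have h4 : 1 < ∏ j ∈ U \ t, ‖μ j‖ :=
      hone_lt _ (fun i hi => hUprop i (Finset.mem_sdiff.1 hi).1) hUt
    have h5 : (∏ j ∈ U ∩ t, ‖μ j‖) < P := by
      nlinarith [hwpos (U ∩ t)]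
    have h1 : (∏ j ∈ t, ‖μ j‖)
        = (∏ j ∈ t ∩ U, ‖μ j‖) * (∏ j ∈ t \ U, ‖μ j‖) :=
      (Finset.prod_inter_mul_prod_diff t U _).symm
    have h2 : (∏ j ∈ t \ U, ‖μ j‖) ≤ 1 := by
      refine Finset.prod_le_one (fun j _ => (hνpos j).le) ?_
      intro j hj
      have hj2 := (Finset.mem_sdiff.1 hj).2
      have : ¬ 1 < ‖μ j‖ := by simpa [hU] using hj2
      linarith [lt_or_gt_of_ne (hμ1 j), this]
    rw [Finset.inter_comm] at h5
    nlinarith [hwpos (t ∩ U), hwpos (t \ U)]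
  -- upper bound on each |a_{i,n}|
  have habs_le : ∀ n i, 1 ≤ i → i ≤ m → ‖acoef m μ n i‖
      ≤ ∑ t ∈ Finset.powersetCard i (Finset.univ : Finset (Fin m)),
          (∏ j ∈ t, ‖μ j‖) ^ n := by
    intro n i h1 h2
    rw [acoef_abs m μ n i h1 h2]
    refine le_trans (norm_sum_le _ _) (le_of_eq (Finset.sum_congr rfl ?_))
    intro t _
    exact abs_prod_pow m μ n t
  -- upper bound on S_n
  have hSup : ∀ n : ℕ, (∑ i ∈ Finset.Icc 1 m, ‖acoef m μ n i‖)
      ≤ ((m : ℝ) * 2 ^ m) * P ^ n := by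
    intro n
    have hinner : ∀ i ∈ Finset.Icc 1 m,
        ‖acoef m μ n i‖ ≤ (2 ^ m : ℝ) * P ^ n := by
      intro i hi
      obtain ⟨hi1, hi2⟩ := Finset.mem_Icc.1 hi
      refine le_trans (habs_le n i hi1 hi2) ?_
      have hcard : ((Finset.powersetCard i (Finset.univ : Finset (Fin m))).card : ℝ)
          ≤ (2 : ℝ) ^ m := by
        have h := Finset.card_le_card (s := Finset.powersetCard i (Finset.univ : Finset (Fin m)))
          (t := (Finset.univ : Finset (Fin m)).powerset)
          (fun t ht => Finset.mem_powerset.2 (Finset.mem_powersetCard.1 ht).1)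
        rw [Finset.card_powerset] at h
        calc ((Finset.powersetCard i (Finset.univ : Finset (Fin m))).card : ℝ)
            ≤ ((2 ^ (Finset.univ : Finset (Fin m)).card : ℕ) : ℝ) := by exact_mod_cast h
          _ = (2 : ℝ) ^ m := by norm_num
      calc (∑ t ∈ Finset.powersetCard i (Finset.univ : Finset (Fin m)),
            (∏ j ∈ t, ‖μ j‖) ^ n)
          ≤ ∑ _t ∈ Finset.powersetCard i (Finset.univ : Finset (Fin m)), P ^ n :=
            Finset.sum_le_sum fun t _ => pow_le_pow_left₀ (hwpos t).le (hwle t) n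
        _ = ((Finset.powersetCard i (Finset.univ : Finset (Fin m))).card : ℝ) * P ^ n := by
            rw [Finset.sum_const, nsmul_eq_mul]
        _ ≤ (2 ^ m : ℝ) * P ^ n := by
            exact mul_le_mul_of_nonneg_right hcard (by positivity)
    calc (∑ i ∈ Finset.Icc 1 m, ‖acoef m μ n i‖)
        ≤ ∑ _i ∈ Finset.Icc 1 m, (2 ^ m : ℝ) * P ^ n := Finset.sum_le_sum hinner
      _ = ((m : ℝ) * 2 ^ m) * P ^ n := by
          rw [Finset.sum_const, Nat.card_Icc, Nat.add_sub_cancel, nsmul_eq_mul]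
          ring
  -- lower bound on |a_{k,n}|
  have habs_sub : ∀ x y : ℂ, ‖x‖ - ‖y‖ ≤ ‖x + y‖ := by
    intro x y
    have h := norm_add_le (x + y) (-y)
    simp only [add_neg_cancel_right, norm_neg] at h
    linarith
  have hUmem : U ∈ Finset.powersetCard k (Finset.univ : Finset (Fin m)) :=
    Finset.mem_powersetCard.2 ⟨Finset.subset_univ U, rfl⟩
  have habs_ge : ∀ n : ℕ,
      P ^ n - (∑ t ∈ (Finset.powersetCard k (Finset.univ : Finset (Fin m))).erase U,
          (∏ j ∈ t, ‖μ j‖) ^ n)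
        ≤ ‖acoef m μ n k‖ := by
    intro n
    rw [acoef_abs m μ n k hk1 hkm, ← Finset.add_sum_erase _ _ hUmem]
    have h1 : ‖∏ j ∈ U, μ j ^ n‖ = P ^ n := by
      rw [abs_prod_pow, hPdef]
    have h2 : ‖∑ t ∈ (Finset.powersetCard k (Finset.univ : Finset (Fin m))).erase U,
          ∏ j ∈ t, μ j ^ n‖
        ≤ ∑ t ∈ (Finset.powersetCard k (Finset.univ : Finset (Fin m))).erase U,
          (∏ j ∈ t, ‖μ j‖) ^ n := by
      refine le_trans (norm_sum_le _ _) (le_of_eq (Finset.sum_congr rfl ?_))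
      intro t _
      exact abs_prod_pow m μ n t
    have h3 := habs_sub (∏ j ∈ U, μ j ^ n)
      (∑ t ∈ (Finset.powersetCard k (Finset.univ : Finset (Fin m))).erase U, ∏ j ∈ t, μ j ^ n)
    rw [h1] at h3
    linarith
  -- the error term tends to zero
  have hg : Filter.Tendsto (fun n : ℕ =>
      ∑ t ∈ (Finset.powersetCard k (Finset.univ : Finset (Fin m))).erase U,
        ((∏ j ∈ t, ‖μ j‖) / P) ^ n) Filter.atTop (nhds 0) := by
    have h := tendsto_finset_sum
      ((Finset.powersetCard k (Finset.univ : Finset (Fin m))).erase U)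
      (f := fun t (n : ℕ) => ((∏ j ∈ t, ‖μ j‖) / P) ^ n)
      (a := fun _ => (0 : ℝ))
      (fun t ht => tendsto_pow_atTop_nhds_zero_of_lt_one (by positivity)
        (by rw [div_lt_one hP0]; exact hwlt t ht))
    simpa using h
  have hhalf : ∀ᶠ n : ℕ in Filter.atTop,
      (∑ t ∈ (Finset.powersetCard k (Finset.univ : Finset (Fin m))).erase U,
        ((∏ j ∈ t, ‖μ j‖) / P) ^ n) < 1 / 2 := by
    have : Set.Iio ((1:ℝ)/2) ∈ nhds (0 : ℝ) := Iio_mem_nhds (by norm_num)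
    exact hg.eventually (eventually_of_mem this (fun x hx => hx))
  -- eventual lower bound on S_n
  have hSlow : ∀ᶠ n : ℕ in Filter.atTop,
      P ^ n * (1 / 2) ≤ ∑ i ∈ Finset.Icc 1 m, ‖acoef m μ n i‖ := by
    filter_upwards [hhalf] with n hn
    have herr : (∑ t ∈ (Finset.powersetCard k (Finset.univ : Finset (Fin m))).erase U,
        (∏ j ∈ t, ‖μ j‖) ^ n)
        = P ^ n * (∑ t ∈ (Finset.powersetCard k (Finset.univ : Finset (Fin m))).erase U,
          ((∏ j ∈ t, ‖μ j‖) / P) ^ n) := by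
      rw [Finset.mul_sum]
      refine Finset.sum_congr rfl (fun t _ => ?_)
      rw [div_pow]
      field_simp
    have hkin : k ∈ Finset.Icc 1 m := Finset.mem_Icc.2 ⟨hk1, hkm⟩
    have hsingle : ‖acoef m μ n k‖
        ≤ ∑ i ∈ Finset.Icc 1 m, ‖acoef m μ n i‖ :=
      Finset.single_le_sum (f := fun i => ‖acoef m μ n i‖)
        (fun i _ => norm_nonneg _) hkin
    have hge := habs_ge n
    rw [herr] at hge
    have hPn : (0:ℝ) < P ^ n := pow_pos hP0 n
    have hmul : P ^ n * (∑ t ∈ (Finset.powersetCard k (Finset.univ : Finset (Fin m))).erase U,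
          ((∏ j ∈ t, ‖μ j‖) / P) ^ n) ≤ P ^ n * (1 / 2) :=
      mul_le_mul_of_nonneg_left hn.le hPn.le
    linarith
  -- rewrite the limit value
  have hsum : (∑ i ∈ U, Real.logb 2 (‖μ i‖)) = Real.logb 2 P := by
    rw [hPdef]
    exact (Real.logb_prod U (fun i => ‖μ i‖) (fun i _ => (hνpos i).ne')).symm
  rw [hsum]
  -- squeeze
  have hC0 : (0:ℝ) < (m : ℝ) * 2 ^ m := by
    have : (0:ℝ) < (m:ℝ) := by exact_mod_cast hm
    positivity
  refine tendsto_of_tendsto_of_tendsto_of_le_of_le'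
    (g := fun n : ℕ => Real.logb 2 P - 1 / (n : ℝ))
    (h := fun n : ℕ => Real.logb 2 P + Real.logb 2 ((m : ℝ) * 2 ^ m) * (1 / (n : ℝ)))
    ?_ ?_ ?_ ?_
  · have := tendsto_const_nhds (x := Real.logb 2 P) (f := Filter.atTop (α := ℕ))
      |>.sub tendsto_one_div_atTop_nhds_zero_nat
    simpa using this
  · have := tendsto_const_nhds (x := Real.logb 2 P) (f := Filter.atTop (α := ℕ))
      |>.add (tendsto_one_div_atTop_nhds_zero_nat.const_mul (Real.logb 2 ((m : ℝ) * 2 ^ m)))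
    simpa using this
  · -- lower bound
    filter_upwards [hSlow, Filter.eventually_ge_atTop 1] with n hSn hn1
    have hn0 : (0:ℝ) < (n : ℝ) := by exact_mod_cast hn1
    have hSpos : (0:ℝ) < ∑ i ∈ Finset.Icc 1 m, ‖acoef m μ n i‖ :=
      lt_of_lt_of_le (by positivity) hSn
    have hlog : Real.logb 2 (P ^ n * (1 / 2))
        ≤ Real.logb 2 (∑ i ∈ Finset.Icc 1 m, ‖acoef m μ n i‖) :=
      Real.logb_le_logb_of_le one_lt_two (by positivity) hSn
    have heq : Real.logb 2 (P ^ n * (1 / 2)) = n * Real.logb 2 P - 1 := by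
      rw [Real.logb_mul (by positivity) (by norm_num), Real.logb_pow]
      have h12 : Real.logb 2 ((1:ℝ)/2) = -1 := by
        rw [one_div, Real.logb_inv, Real.logb_self_eq_one one_lt_two]
      rw [h12]
      ring
    rw [heq] at hlog
    have : Real.logb 2 P - 1 / (n:ℝ) = 1 / (n:ℝ) * ((n:ℝ) * Real.logb 2 P - 1) := by
      field_simp
    rw [this]
    exact mul_le_mul_of_nonneg_left hlog (by positivity)
  · -- upper bound
    filter_upwards [hSlow, Filter.eventually_ge_atTop 1] with n hSn hn1
    have hn0 : (0:ℝ) < (n : ℝ) := by exact_mod_cast hn1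
    have hSpos : (0:ℝ) < ∑ i ∈ Finset.Icc 1 m, ‖acoef m μ n i‖ :=
      lt_of_lt_of_le (by positivity) hSn
    have hlog : Real.logb 2 (∑ i ∈ Finset.Icc 1 m, ‖acoef m μ n i‖)
        ≤ Real.logb 2 (((m : ℝ) * 2 ^ m) * P ^ n) :=
      Real.logb_le_logb_of_le one_lt_two hSpos (hSup n)
    have heq : Real.logb 2 (((m : ℝ) * 2 ^ m) * P ^ n)
        = Real.logb 2 ((m : ℝ) * 2 ^ m) + n * Real.logb 2 P := by
      rw [Real.logb_mul (ne_of_gt hC0) (by positivity), Real.logb_pow]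
    rw [heq] at hlog
    have : Real.logb 2 P + Real.logb 2 ((m : ℝ) * 2 ^ m) * (1 / (n:ℝ))
        = 1 / (n:ℝ) * (Real.logb 2 ((m : ℝ) * 2 ^ m) + (n:ℝ) * Real.logb 2 P) := by
      field_simp
      ring
    rw [this]
    exact mul_le_mul_of_nonneg_left hlog (by positivity)
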